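/- arXiv:1911.08027 — 2 statements merged into one kernel-verified Lean document; each statement's English description precedes it below -/
import Mathlib

section
/- In the graph model on subsets of ℕ, define S to be the set of all codes π(x, π(y, π(z, w))) such that there exists a finite set a with: some z₁ ⊆ e_z satisfies π(z₁, π(a, w)) ∈ e_x, and for every c ∈ e_a there is z₂ ⊆ e_z with π(z₂, c) ∈ e_y. Then for all X, Y, Z ⊆ ℕ, ((S · X) · Y) · Z = (X · Z) · (Y · Z). -/
def ek (k : ℕ) : Set ℕ := {j | Nat.testBit k j}

def gapp (X Y : Set ℕ) : Set ℕ := {n | ∃ k, ek k ⊆ Y ∧ Nat.pair k n ∈ X}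

/-- The graph-model S combinator: all codes `π(x, π(y, π(z, w)))` such that for some
finite set `a`: some `z₁ ⊆ e_z` has `π(z₁, π(a, w)) ∈ e_x`, and every `c ∈ e_a`
has some `z₂ ⊆ e_z` with `π(z₂, c) ∈ e_y`. -/
def Sgraph : Set ℕ :=
  {p | ∃ x y z w a, p = Nat.pair x (Nat.pair y (Nat.pair z w)) ∧
    (∃ z₁, ek z₁ ⊆ ek z ∧ Nat.pair z₁ (Nat.pair a w) ∈ ek x) ∧
    (∀ c ∈ ek a, ∃ z₂, ek z₂ ⊆ ek z ∧ Nat.pair z₂ c ∈ ek y)}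

lemma ek_lor (m n : ℕ) : ek (m ||| n) = ek m ∪ ek n := by
  ext j
  simp [ek, Nat.testBit_lor]

lemma ek_finite (k : ℕ) : (ek k).Finite := by
  apply Set.Finite.subset (Set.finite_Iio k)
  intro j hj
  have h1 : Nat.testBit k j = true := hj
  have h2 : 2 ^ j ≤ k := by
    by_contra h
    rw [Nat.testBit_lt_two_pow (Nat.lt_of_not_le h)] at h1
    exact Bool.false_ne_true h1
  exact lt_of_lt_of_le (Nat.lt_two_pow_self (n := j)) h2

lemma ek_code (s : Set ℕ) (hs : s.Finite) : ∃ k, ek k = s := by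
  refine Set.Finite.induction_on s hs ⟨0, by ext j; simp [ek, Nat.zero_testBit]⟩ ?_
  rintro a t _ _ ⟨k, hk⟩
  refine ⟨2 ^ a ||| k, ?_⟩
  rw [ek_lor, hk]
  ext j
  simp [ek, Nat.testBit_two_pow, eq_comm]

/-- `S · X · Y · Z = (X · Z) · (Y · Z)` in the graph model. -/
theorem Sgraph_spec (X Y Z : Set ℕ) :
    gapp (gapp (gapp Sgraph X) Y) Z = gapp (gapp X Z) (gapp Y Z) := by
  ext n
  constructor
  · rintro ⟨z, hzZ, y, hyY, x, hxX, x', y', z', w, a, heq, ⟨z₁, hz₁, hz₁x⟩, hc⟩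
    obtain ⟨hx, hy, hz, hw⟩ : x' = x ∧ y' = y ∧ z' = z ∧ w = n := by
      rw [Nat.pair_eq_pair, Nat.pair_eq_pair, Nat.pair_eq_pair] at heq
      tauto
    subst hx hy hz hw
    refine ⟨a, ?_, z₁, hz₁.trans hzZ, hxX hz₁x⟩
    intro c hcA
    obtain ⟨z₂, hz₂, hz₂y⟩ := hc c hcA
    exact ⟨z₂, hz₂.trans hzZ, hyY hz₂y⟩
  · rintro ⟨a, haYZ, z₁, hz₁Z, hX⟩
    -- choose witnesses for each c ∈ ek a
    choose f hf1 hf2 using fun c (hc : c ∈ ek a) => haYZ hc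
    classical
    -- x : code of the singleton {pair z₁ (pair a n)}
    obtain ⟨x, hx⟩ := ek_code {Nat.pair z₁ (Nat.pair a n)} (Set.finite_singleton _)
    -- total versions of the chosen functions
    set g : ℕ → ℕ := fun c => if h : c ∈ ek a then f c h else 0 with hg
    have hg1 : ∀ c ∈ ek a, ek (g c) ⊆ Z := fun c hc => by simp only [hg, dif_pos hc]; exact hf1 c hc
    have hg2 : ∀ c ∈ ek a, Nat.pair (g c) c ∈ Y := fun c hc => by
      simp only [hg, dif_pos hc]; exact hf2 c hc
    -- y : code of the set of pairs
    obtain ⟨y, hy⟩ := ek_code ((fun c => Nat.pair (g c) c) '' ek a) ((ek_finite a).image _)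
    -- z : code of ek z₁ ∪ ⋃ c ∈ ek a, ek (g c)
    obtain ⟨z, hz⟩ := ek_code (ek z₁ ∪ ⋃ c ∈ ek a, ek (g c))
      ((ek_finite z₁).union ((ek_finite a).biUnion fun c _ => ek_finite _))
    refine ⟨z, ?_, y, ?_, x, ?_, x, y, z, n, a, rfl, ?_, ?_⟩
    · -- ek z ⊆ Z
      rw [hz]
      rintro j (hj | hj)
      · exact hz₁Z hj
      · obtain ⟨c, hc, hj⟩ := Set.mem_iUnion₂.mp hj
        exact hg1 c hc hj
    · -- ek y ⊆ Y
      rw [hy]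
      rintro p ⟨c, hc, rfl⟩
      exact hg2 c hc
    · -- ek x ⊆ X
      rw [hx]
      rintro p rfl
      exact hX
    · -- first Sgraph condition
      refine ⟨z₁, ?_, by rw [hx]; rfl⟩
      rw [hz]; exact Set.subset_union_left
    · -- second Sgraph condition
      intro c hc
      refine ⟨g c, ?_, ?_⟩
      · rw [hz]
        exact (Set.subset_biUnion_of_mem (u := fun d => ek (g d)) hc).trans Set.subset_union_right
      · rw [hy]
        exact ⟨c, hc, rfl⟩
end

section
/- In the graph model on subsets of ℕ, the collection of computably enumerable subsets of ℕ is closed under application: if X and Y are c.e. subsets of ℕ, then X · Y = {n | ∃ k, e_k ⊆ Y ∧ π(k, n) ∈ X} is c.e. -/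
/-- `X ⊆ ℕ` is computably enumerable: it is the domain of a partial computable
function. -/
def CE (X : Set ℕ) : Prop := ∃ f : ℕ →. ℕ, Partrec f ∧ ∀ n, n ∈ X ↔ (f n).Dom

open Nat.Partrec (Code)
open Nat.Partrec.Code

private lemma testBit_le {k j : ℕ} (h : Nat.testBit k j = true) : j ≤ k := by
  by_contra hc
  push_neg at hc
  have h2 : k < 2 ^ j := lt_of_lt_of_le hc (Nat.le_of_lt (Nat.lt_two_pow_self (n := j)))
  rw [Nat.testBit_lt_two_pow h2] at h
  exact Bool.false_ne_true h

private lemma primrec_testBit : Primrec₂ Nat.testBit := by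
  have hpow : Primrec₂ ((· ^ ·) : ℕ → ℕ → ℕ) := Primrec₂.unpaired'.1 Nat.Primrec.pow
  have : Primrec₂ fun k j : ℕ => (k / 2 ^ j % 2) == 1 :=
    Primrec.beq.comp₂
      ((Primrec.nat_mod.comp
        (Primrec.nat_div.comp Primrec.fst (hpow.comp (Primrec.const 2) Primrec.snd))
        (Primrec.const 2)).to₂)
      (Primrec₂.const 1)
  refine this.of_eq fun k j => ?_
  rw [Nat.testBit_eq_decide_div_mod_eq]
  apply Bool.eq_iff_iff.2
  simp

private lemma brec_spec (cY : Code) (k t : ℕ) : ∀ m : ℕ,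
    ((Nat.rec true (fun j b => b && (!(Nat.testBit k j) || (evaln t cY j).isSome)) m : Bool)
      = true ↔ ∀ j < m, Nat.testBit k j → (evaln t cY j).isSome) := by
  intro m
  induction m with
  | zero => simp
  | succ m ih =>
    show (_ && _) = true ↔ _
    simp only [Bool.and_eq_true, Bool.or_eq_true, Bool.not_eq_true', ih]
    constructor
    · rintro ⟨h1, h2⟩ j hj hbit
      rcases Nat.lt_succ_iff_lt_or_eq.1 hj with h | rfl
      · exact h1 j h hbit
      · rcases h2 with h | h
        · rw [hbit] at h; exact absurd h (by simp)
        · exact h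
    · intro h
      refine ⟨fun j hj hb => h j (hj.trans (Nat.lt_succ_self m)) hb, ?_⟩
      by_cases hb : Nat.testBit k m
      · exact Or.inr (h m (Nat.lt_succ_self m) hb)
      · exact Or.inl (by simpa using hb)

/-- The c.e. subsets of ℕ are closed under graph-model application. -/
theorem ce_closed_under_gapp (X Y : Set ℕ) (hX : CE X) (hY : CE Y) :
    CE (gapp X Y) := by
  classical
  obtain ⟨fX, hfX, hXd⟩ := hX
  obtain ⟨fY, hfY, hYd⟩ := hY
  obtain ⟨cX, hcX⟩ := Code.exists_code.1 (Partrec.nat_iff.1 hfX)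
  obtain ⟨cY, hcY⟩ := Code.exists_code.1 (Partrec.nat_iff.1 hfY)
  -- the dovetailing test: input (n, s), decode s = (k, t), check stage-t computations
  let B : ℕ → ℕ → Bool := fun k t =>
    Nat.rec true (fun j b => b && (!(Nat.testBit k j) || (evaln t cY j).isSome)) (k + 1)
  let G : ℕ × ℕ → Bool := fun p =>
    (evaln p.2.unpair.2 cX (Nat.pair p.2.unpair.1 p.1)).isSome &&
      B p.2.unpair.1 p.2.unpair.2
  have hk : Primrec fun p : ℕ × ℕ => p.2.unpair.1 :=
    Primrec.fst.comp (Primrec.unpair.comp Primrec.snd)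
  have ht : Primrec fun p : ℕ × ℕ => p.2.unpair.2 :=
    Primrec.snd.comp (Primrec.unpair.comp Primrec.snd)
  have hGX : Primrec fun p : ℕ × ℕ =>
      (evaln p.2.unpair.2 cX (Nat.pair p.2.unpair.1 p.1)).isSome :=
    Primrec.option_isSome.comp
      (primrec_evaln.comp
        ((ht.pair (Primrec.const cX)).pair (Primrec₂.natPair.comp hk Primrec.fst)))
  have hGB : Primrec fun p : ℕ × ℕ => B p.2.unpair.1 p.2.unpair.2 := by
    have := Primrec.nat_rec' (f := fun p : ℕ × ℕ => p.2.unpair.1 + 1)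
      (g := fun _ : ℕ × ℕ => true)
      (h := fun (p : ℕ × ℕ) (jb : ℕ × Bool) =>
        jb.2 && (!(Nat.testBit p.2.unpair.1 jb.1) || (evaln p.2.unpair.2 cY jb.1).isSome))
      (Primrec.succ.comp hk) (Primrec.const true)
      (Primrec₂.mk <| by
        refine Primrec.dom_bool₂ (· && ·) |>.comp
          (Primrec.snd.comp Primrec.snd) ?_
        refine Primrec.dom_bool₂ (· || ·) |>.comp ?_ ?_
        · exact (Primrec.dom_bool (!·)).comp
            (primrec_testBit.comp (hk.comp Primrec.fst) (Primrec.fst.comp Primrec.snd))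
        · exact Primrec.option_isSome.comp
            (primrec_evaln.comp
              (((ht.comp Primrec.fst).pair (Primrec.const cY)).pair
                (Primrec.fst.comp Primrec.snd))))
    exact this.of_eq fun p => rfl
  have hG : Primrec G := (Primrec.dom_bool₂ (· && ·)).comp hGX hGB
  -- the partial function whose domain is gapp X Y
  refine ⟨fun n => Nat.rfindOpt fun s => cond (G (n, s)) (some 0) none, ?_, ?_⟩
  · exact Partrec.rfindOpt
      ((Primrec.cond hG (Primrec.const (some 0)) (Primrec.const none)).to₂.to_comp)
  · intro n
    rw [Nat.rfindOpt_dom]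
    constructor
    · rintro ⟨k, hkY, hkX⟩
      -- find a stage for X
      have hx : (eval cX (Nat.pair k n)).Dom := by
        rw [hcX]; exact (hXd _).1 hkX
      obtain ⟨x, hx⟩ := Part.dom_iff_mem.1 hx
      obtain ⟨t₁, ht₁⟩ := evaln_complete.1 hx
      -- find stages for Y
      have hch : ∀ j : ℕ, ∃ t, Nat.testBit k j → (evaln t cY j).isSome := by
        intro j
        by_cases hb : Nat.testBit k j
        · have : (eval cY j).Dom := by rw [hcY]; exact (hYd _).1 (hkY hb)
          obtain ⟨y, hy⟩ := Part.dom_iff_mem.1 this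
          obtain ⟨t, htt⟩ := evaln_complete.1 hy
          exact ⟨t, fun _ => Option.isSome_iff_exists.2 ⟨y, htt⟩⟩
        · exact ⟨0, fun h => absurd h hb⟩
      choose φ hφ using hch
      set T : ℕ := max t₁ ((Finset.range (k + 1)).sup φ) with hT
      refine ⟨Nat.pair k T, 0, ?_⟩
      have hG1 : G (n, Nat.pair k T) = true := by
        have h1 : (evaln T cX (Nat.pair k n)).isSome :=
          Option.isSome_iff_exists.2 ⟨x, evaln_mono (le_max_left _ _) ht₁⟩
        have h2 : B k T = true := (brec_spec cY k T (k + 1)).2 (by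
          intro j hj hb
          have hj' : (evaln (φ j) cY j).isSome = true := hφ j hb
          obtain ⟨y, hy⟩ := Option.isSome_iff_exists.1 hj'
          have hle : φ j ≤ T :=
            le_trans (Finset.le_sup (Finset.mem_range.2 hj)) (le_max_right _ _)
          exact Option.isSome_iff_exists.2 ⟨y, evaln_mono hle hy⟩)
        simp only [G, Nat.unpair_pair]
        rw [h1, h2]
        rfl
      rw [hG1]
      simp
    · rintro ⟨s, a, ha⟩
      have hGs : G (n, s) = true := by
        by_contra hc
        rw [Bool.not_eq_true] at hc
        rw [hc] at ha
        simp at ha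
      set k := s.unpair.1 with hk'
      set t := s.unpair.2 with ht'
      have h1 : (evaln t cX (Nat.pair k n)).isSome = true ∧ B k t = true := by
        simpa [G, Bool.and_eq_true] using hGs
      refine ⟨k, ?_, ?_⟩
      · intro j hj
        have hb : Nat.testBit k j = true := hj
        have hjk : j < k + 1 := Nat.lt_succ_of_le (testBit_le hb)
        have := (brec_spec cY k t (k + 1)).1 h1.2 j hjk hb
        obtain ⟨y, hy⟩ := Option.isSome_iff_exists.1 this
        have : y ∈ eval cY j := evaln_sound hy
        exact (hYd j).2 (by rw [← hcY] at *; exact Part.dom_iff_mem.2 ⟨y, this⟩)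
      · obtain ⟨x, hx⟩ := Option.isSome_iff_exists.1 h1.1
        have : x ∈ eval cX (Nat.pair k n) := evaln_sound hx
        exact (hXd _).2 (by rw [← hcX] at *; exact Part.dom_iff_mem.2 ⟨x, this⟩)
end
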